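/- Let I_u^w(α,β) = {u cos λ + w sin λ : λ ∈ [α,β]} with −π/2 < α ≤ β < π/2, and let v ∈ S_u^+, w ∈ S_u ∩ S_v. Then tan h_v(I_u^w(α,β), w) = (tan β)/(u·v) and tan h_v(I_u^w(α,β), −w) = −(tan α)/(u·v). -/

import Mathlib

open scoped RealInnerProductSpace Pointwise
open Real

noncomputable section

/-- `Esp n` is the ambient Euclidean space `ℝ^{n+1}` containing the unit sphere `S^n`. -/
abbrev Esp (n : ℕ) : Type := EuclideanSpace ℝ (Fin (n + 1))

/-- The unit sphere `S^n ⊆ ℝ^{n+1}`. -/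
def uSphere (n : ℕ) : Set (Esp n) := {x | ‖x‖ = 1}

/-- `rad A = {λ • x : λ ≥ 0, x ∈ A}`. -/
def radSet {n : ℕ} (A : Set (Esp n)) : Set (Esp n) :=
  {y | ∃ l : ℝ, 0 ≤ l ∧ ∃ x ∈ A, y = l • x}

/-- A set `A ⊆ S^n` is spherically convex if `rad A` is convex. -/
def SphConvex {n : ℕ} (A : Set (Esp n)) : Prop := Convex ℝ (radSet A)

/-- The open hemisphere centered at `u`. -/
def openHemi {n : ℕ} (u : Esp n) : Set (Esp n) := {v | ‖v‖ = 1 ∧ 0 < ⟪u, v⟫}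

/-- The equator `S_u = {v ∈ S^n : u ⬝ v = 0}`. -/
def equator {n : ℕ} (u : Esp n) : Set (Esp n) := {v | ‖v‖ = 1 ∧ ⟪u, v⟫ = 0}

/-- Proper convex bodies contained in the open hemisphere centered at `u`:
the class `K_u^p(S^n)`. -/
def properBodies {n : ℕ} (u : Esp n) : Set (Set (Esp n)) :=
  {K | K.Nonempty ∧ IsClosed K ∧ K ⊆ openHemi u ∧ SphConvex K}

/-- All proper convex bodies `K^p(S^n)`. -/
def allProperBodies (n : ℕ) : Set (Set (Esp n)) :=
  {K | ∃ u : Esp n, ‖u‖ = 1 ∧ K ∈ properBodies u}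

/-- The gnomonic projection `g_u(v) = v/(u⬝v) − u`. -/
def gno {n : ℕ} (u v : Esp n) : Esp n := (⟪u, v⟫)⁻¹ • v - u

/-- The inverse gnomonic projection `x ↦ (x+u)/‖x+u‖`. -/
def gnoInv {n : ℕ} (u x : Esp n) : Esp n := ‖x + u‖⁻¹ • (x + u)

/-- The hyperplane `ℝ^n_u = u^⊥` of `ℝ^{n+1}`. -/
def hyper {n : ℕ} (u : Esp n) : Set (Esp n) := {x | ⟪u, x⟫ = 0}

/-- The class `K(ℝ^n_u)` of (nonempty) compact convex subsets of the hyperplane `u^⊥`. -/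
def cptCvx {n : ℕ} (u : Esp n) : Set (Set (Esp n)) :=
  {C | C.Nonempty ∧ IsCompact C ∧ Convex ℝ C ∧ C ⊆ hyper u}

/-- The spherical support function `h_u(K,v) = max {sgn(v⬝w) d(u, w|S_{u,v}) : w ∈ K}`,
where `d(u, w|S_{u,v}) = arccos ((u⬝w)/√((u⬝w)² + (v⬝w)²))`. -/
def sphSupp {n : ℕ} (u : Esp n) (K : Set (Esp n)) (v : Esp n) : ℝ :=
  sSup ((fun w => Real.sign ⟪v, w⟫ *
    Real.arccos (⟪u, w⟫ / Real.sqrt (⟪u, w⟫ ^ 2 + ⟪v, w⟫ ^ 2))) '' K)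

/-- The Euclidean support function `h(C,x) = sup {x ⬝ y : y ∈ C}`. -/
def esupp {n : ℕ} (C : Set (Esp n)) (x : Esp n) : ℝ :=
  sSup ((fun y => ⟪x, y⟫) '' C)

/-- Spherical (geodesic) distance on `S^n`. -/
def sphDist {n : ℕ} (x y : Esp n) : ℝ := Real.arccos ⟪x, y⟫

/-- The Hausdorff distance `δ_s` induced by the spherical distance. -/
def sphHaus {n : ℕ} (A B : Set (Esp n)) : ℝ :=
  sInf {r | 0 ≤ r ∧ (∀ a ∈ A, ∃ b ∈ B, sphDist a b ≤ r) ∧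
    (∀ b ∈ B, ∃ a ∈ A, sphDist a b ≤ r)}

/-- The metric `γ_u(K,L) = max_{v ∈ S_u} |h_u(K,v) − h_u(L,v)|`. -/
def gammaU {n : ℕ} (u : Esp n) (K L : Set (Esp n)) : ℝ :=
  sSup ((fun v => |sphSupp u K v - sphSupp u L v|) '' equator u)

/-- Spherical projection of `K` onto the great subsphere `V ∩ S^n`:
`K|S = (rad K | V) ∩ S^n`. -/
def sphProj {n : ℕ} (V : Submodule ℝ (Esp n)) (K : Set (Esp n)) : Set (Esp n) :=
  ((fun x => (Submodule.orthogonalProjectionOnto V x : Esp n)) '' radSet K) ∩ uSphere n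

/-- Orthogonal projection of a subset of `ℝ^{n+1}` onto a linear subspace `W`. -/
def eProj {n : ℕ} (W : Submodule ℝ (Esp n)) (C : Set (Esp n)) : Set (Esp n) :=
  (fun x => (Submodule.orthogonalProjectionOnto W x : Esp n)) '' C

/-- The spherical convex hull: the intersection of all spherically convex subsets of `S^n`
containing `A`. -/
def sphHull {n : ℕ} (A : Set (Esp n)) : Set (Esp n) :=
  ⋂₀ {B | A ⊆ B ∧ B ⊆ uSphere n ∧ SphConvex B}

/-- The set `C` of pairs of proper convex bodies contained in a common open hemisphere. -/
def pairsC (n : ℕ) : Set (Set (Esp n) × Set (Esp n)) :=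
  {p | ∃ u : Esp n, ‖u‖ = 1 ∧ p.1 ∈ properBodies u ∧ p.2 ∈ properBodies u}

/-- `u`-projection covariance of a binary operation on `K_u^p(S^n)`:
`(K|S) * (L|S) = (K*L)|S` for all great subspheres `S = V ∩ S^n` through `u`
with `0 ≤ k = dim S ≤ n − 1`. -/
def uProjCovariant {n : ℕ} (u : Esp n)
    (op : Set (Esp n) → Set (Esp n) → Set (Esp n)) : Prop :=
  ∀ V : Submodule ℝ (Esp n), u ∈ V → Module.finrank ℝ V ≤ n →
    ∀ K ∈ properBodies u, ∀ L ∈ properBodies u,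
      op (sphProj V K) (sphProj V L) = sphProj V (op K L)

/-- Projection covariance: `u`-projection covariance for every `u ∈ S^n`. -/
def projCovariantC {n : ℕ} (op : Set (Esp n) → Set (Esp n) → Set (Esp n)) : Prop :=
  ∀ u : Esp n, ‖u‖ = 1 → uProjCovariant u op

/-- Projection covariance for operations on compact convex subsets of `u^⊥`. -/
def eProjCovariant {n : ℕ} (u : Esp n)
    (op : Set (Esp n) → Set (Esp n) → Set (Esp n)) : Prop :=
  ∀ W : Submodule ℝ (Esp n), (W : Set (Esp n)) ⊆ hyper u →
    ∀ K ∈ cptCvx u, ∀ L ∈ cptCvx u,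
      op (eProj W K) (eProj W L) = eProj W (op K L)

lemma keySign (c l : ℝ) (hc : 0 < c) (h1 : -(π / 2) < l) (h2 : l < π / 2) :
    Real.sign (Real.sin l) *
      Real.arccos ((c * Real.cos l) / Real.sqrt ((c * Real.cos l) ^ 2 + Real.sin l ^ 2)) =
    Real.arctan (Real.tan l / c) := by
  have hpi := Real.pi_pos
  have hcos : 0 < Real.cos l := Real.cos_pos_of_mem_Ioo ⟨h1, h2⟩
  have hccos : 0 < c * Real.cos l := by positivity
  set t := Real.tan l / c with ht
  have hsqrtpos : 0 < Real.sqrt (1 + t ^ 2) := Real.sqrt_pos.2 (by positivity)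
  have hratio : (c * Real.cos l) / Real.sqrt ((c * Real.cos l) ^ 2 + Real.sin l ^ 2)
      = Real.cos (Real.arctan t) := by
    rw [Real.cos_arctan]
    have hsq : (c * Real.cos l) ^ 2 + Real.sin l ^ 2 = (c * Real.cos l) ^ 2 * (1 + t ^ 2) := by
      rw [ht, Real.tan_eq_sin_div_cos]
      field_simp
    rw [hsq, Real.sqrt_mul (by positivity), Real.sqrt_sq hccos.le]
    rw [div_mul_eq_div_div, div_self hccos.ne']
  rw [hratio]
  have harctan_lt : Real.arctan t < π / 2 := Real.arctan_lt_pi_div_two t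
  have harctan_gt : -(π / 2) < Real.arctan t := Real.neg_pi_div_two_lt_arctan t
  rcases lt_trichotomy (Real.sin l) 0 with hs | hs | hs
  · have htneg : t < 0 := by
      rw [ht, Real.tan_eq_sin_div_cos]
      exact div_neg_of_neg_of_pos (div_neg_of_neg_of_pos hs hcos) hc
    have hat : Real.arctan t < 0 := by
      rw [← Real.arctan_zero]
      exact Real.arctan_strictMono htneg
    rw [← Real.cos_neg, Real.arccos_cos (by linarith) (by linarith),
      Real.sign_of_neg hs]
    ring
  · have hl0 : l = 0 := by
      rw [← Real.sin_eq_zero_iff_of_lt_of_lt (by linarith) (by linarith)]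
      exact hs
    subst hl0
    simp [ht, Real.sign_zero]
  · have htpos : 0 < t := by
      rw [ht, Real.tan_eq_sin_div_cos]
      exact div_pos (div_pos hs hcos) hc
    have hat : 0 < Real.arctan t := by
      rw [← Real.arctan_zero]
      exact Real.arctan_strictMono htpos
    rw [Real.arccos_cos (by linarith) (by linarith), Real.sign_of_pos hs]
    ring

lemma tanMonoOn {a b : ℝ} (ha : -(π / 2) < a) (hb : b < π / 2) (hab : a ≤ b) :
    Real.tan a ≤ Real.tan b := by
  rcases eq_or_lt_of_le hab with h | h
  · rw [h]
  · exact (Real.strictMonoOn_tan ⟨ha, lt_of_le_of_lt hab hb⟩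
      ⟨lt_of_lt_of_le ha hab, hb⟩ h).le

/-- For the spherical segment
`I_u^w(α,β) = {cos λ • u + sin λ • w : λ ∈ [α,β]}` with `−π/2 < α ≤ β < π/2`, and
`v ∈ S_u^+`, `w ∈ S_u ∩ S_v`:
`tan h_v(I_u^w(α,β), w) = tan β / (u⬝v)` and `tan h_v(I_u^w(α,β), −w) = −tan α / (u⬝v)`. -/
theorem stmt11 {n : ℕ} (hn : 2 ≤ n) (u v w : Esp n)
    (hu : ‖u‖ = 1) (hv : ‖v‖ = 1) (hw : ‖w‖ = 1)
    (huw : ⟪u, w⟫ = 0) (hvw : ⟪v, w⟫ = 0) (huv : 0 < ⟪u, v⟫)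
    (α β : ℝ) (hα : -(π / 2) < α) (hαβ : α ≤ β) (hβ : β < π / 2) :
    Real.tan (sphSupp v
        {x | ∃ l ∈ Set.Icc α β, x = Real.cos l • u + Real.sin l • w} w) =
      Real.tan β / ⟪u, v⟫ ∧
    Real.tan (sphSupp v
        {x | ∃ l ∈ Set.Icc α β, x = Real.cos l • u + Real.sin l • w} (-w)) =
      -(Real.tan α / ⟪u, v⟫) := by
  classical
  set c := ⟪u, v⟫ with hc
  set K : Set (Esp n) :=
    {x | ∃ l ∈ Set.Icc α β, x = Real.cos l • u + Real.sin l • w} with hKdef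
  have hKim : K = (fun l => Real.cos l • u + Real.sin l • w) '' Set.Icc α β := by
    ext x
    constructor
    · rintro ⟨l, hl, rfl⟩; exact ⟨l, hl, rfl⟩
    · rintro ⟨l, hl, rfl⟩; exact ⟨l, hl, rfl⟩
  have hvu : ⟪v, u⟫ = c := by rw [hc]; exact real_inner_comm u v
  have hwu : ⟪w, u⟫ = (0 : ℝ) := by rw [real_inner_comm]; exact huw
  have hiv : ∀ l : ℝ, ⟪v, Real.cos l • u + Real.sin l • w⟫ = c * Real.cos l := by
    intro l
    simp only [inner_add_right, real_inner_smul_right, hvw, hvu]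
    ring
  have hiw : ∀ l : ℝ, ⟪w, Real.cos l • u + Real.sin l • w⟫ = Real.sin l := by
    intro l
    have hww : ⟪w, w⟫ = (1 : ℝ) := by
      rw [real_inner_self_eq_norm_sq, hw]; norm_num
    simp only [inner_add_right, real_inner_smul_right, hwu, hww]
    ring
  have hmem : ∀ l ∈ Set.Icc α β, -(π / 2) < l ∧ l < π / 2 := by
    intro l hl
    exact ⟨lt_of_lt_of_le hα hl.1, lt_of_le_of_lt hl.2 hβ⟩
  -- first part
  have himg1 : (fun x => Real.sign ⟪w, x⟫ *
      Real.arccos (⟪v, x⟫ / Real.sqrt (⟪v, x⟫ ^ 2 + ⟪w, x⟫ ^ 2))) '' K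
      = (fun l => Real.arctan (Real.tan l / c)) '' Set.Icc α β := by
    rw [hKim, ← Set.image_comp]
    apply Set.image_congr
    intro l hl
    simp only [Function.comp_apply]
    rw [hiv l, hiw l]
    exact keySign c l huv (hmem l hl).1 (hmem l hl).2
  have himg2 : (fun x => Real.sign ⟪-w, x⟫ *
      Real.arccos (⟪v, x⟫ / Real.sqrt (⟪v, x⟫ ^ 2 + ⟪-w, x⟫ ^ 2))) '' K
      = (fun l => -Real.arctan (Real.tan l / c)) '' Set.Icc α β := by
    rw [hKim, ← Set.image_comp]
    apply Set.image_congr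
    intro l hl
    simp only [Function.comp_apply]
    rw [inner_neg_left, hiv l, hiw l, neg_pow, Real.sign_neg]
    have := keySign c l huv (hmem l hl).1 (hmem l hl).2
    rw [← this]
    ring_nf
  have hmono : ∀ a b, a ∈ Set.Icc α β → b ∈ Set.Icc α β → a ≤ b →
      Real.arctan (Real.tan a / c) ≤ Real.arctan (Real.tan b / c) := by
    intro a b ha hb hab
    apply Real.arctan_strictMono.monotone
    apply (div_le_div_iff_of_pos_right huv).mpr
    exact tanMonoOn (hmem a ha).1 (hmem b hb).2 hab
  have hsup1 : sphSupp v K w = Real.arctan (Real.tan β / c) := by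
    rw [sphSupp, himg1]
    apply IsGreatest.csSup_eq
    constructor
    · exact ⟨β, ⟨hαβ, le_refl β⟩, rfl⟩
    · rintro x ⟨l, hl, rfl⟩
      exact hmono l β hl ⟨hαβ, le_refl β⟩ hl.2
  have hsup2 : sphSupp v K (-w) = -Real.arctan (Real.tan α / c) := by
    rw [sphSupp, himg2]
    apply IsGreatest.csSup_eq
    constructor
    · exact ⟨α, ⟨le_refl α, hαβ⟩, rfl⟩
    · rintro x ⟨l, hl, rfl⟩
      exact neg_le_neg (hmono α l ⟨le_refl α, hαβ⟩ hl hl.1)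
  constructor
  · rw [hsup1, Real.tan_arctan]
  · rw [hsup2, Real.tan_neg, Real.tan_arctan]
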